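/- Suppose 'valid' is continuous from below, and suppose the family of tests φ can be approximated post-hoc. If φ is post-hoc valid, then its E-value e_φ := ⨆_{α ∈ (0,1)} φ(α) is valid. -/
import Mathlib


/-- Intermediate result in the proof of Theorem 4: if `valid` is continuous from below
and the family of tests `φ` can be approximated post-hoc, then post-hoc validity of `φ`
implies validity of its E-value `e_φ = ⨆ α, φ(α)`. -/
theorem stmt_10 {X D : Type*} [Nonempty X] [CompleteLinearOrder D]
    (d : Set.Ioo (0 : ℝ) 1 → D) (hd : Antitone d)
    (φ : Set.Ioo (0 : ℝ) 1 → X → D)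
    (hφ : ∀ α x, φ α x = ⊥ ∨ φ α x = d α)
    (valid : (X → D) → Prop)
    (hcont : ∀ f : ℕ → X → D, Monotone f → (∀ n, valid (f n)) →
      valid (fun x => ⨆ n, f n x))
    (happrox : ∃ αs : ℕ → X → Set.Ioo (0 : ℝ) 1,
      Monotone (fun n x => φ (αs n x) x) ∧
      ∀ x, (⨆ n, φ (αs n x) x) = ⨆ α, φ α x)
    (hposthoc : ∀ αt : X → Set.Ioo (0 : ℝ) 1, valid (fun x => φ (αt x) x)) :
    valid (fun x => ⨆ α, φ α x) := by
  obtain ⟨αs, hmono, hsup⟩ := happrox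
  have := hcont (fun n x => φ (αs n x) x) hmono (fun n => hposthoc (αs n))
  simpa [hsup] using this
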